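/- arXiv:1712.02576 — 10 statements merged into one kernel-verified Lean document; each statement's English description precedes it below -/
import Mathlib

section
/- Let E = EuclideanSpace ℝ (Fin k), let A ⊆ E be a finite nonempty set, and suppose 0 does not lie in the ℝ-convex hull of A. Let B ∈ convexHull ℝ A satisfy ‖B‖ ≤ ‖y‖ for all y ∈ convexHull ℝ A (B is the closest point of the hull to the origin), so in particular B ≠ 0. Then the supremum, over unit vectors ρ ∈ E, of the minimum over a ∈ A of ⟪a, ρ⟫ equals ‖B‖, and this value is attained at ρ = ‖B‖⁻¹ • B. (This is the computation of the minimal value of the normalised Hilbert–Mumford function for an unstable point of a torus action: it equals the norm of the closest point B(x) to the origin of the state polytope, attained by the one-parameter subgroup obtained by exponentiating B(x).) -/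
open scoped RealInnerProductSpace

/-- **Minimal value of the normalised Hilbert–Mumford function for an unstable point of a
torus action**: if the origin does not lie in the convex hull of the finite nonempty set of
weights `A`, and `B` is the closest point of the hull to the origin, then the supremum over
unit vectors `ρ` of the minimum over `a ∈ A` of `⟪a, ρ⟫` equals `‖B‖`, and this value is
attained at `ρ = ‖B‖⁻¹ • B`. -/
theorem stmt_3 (k : ℕ) (A : Set (EuclideanSpace ℝ (Fin k))) (hA : A.Finite)
    (hne : A.Nonempty) (h0 : (0 : EuclideanSpace ℝ (Fin k)) ∉ convexHull ℝ A)
    (B : EuclideanSpace ℝ (Fin k)) (hB : B ∈ convexHull ℝ A)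
    (hBmin : ∀ y ∈ convexHull ℝ A, ‖B‖ ≤ ‖y‖) :
    IsGreatest {r : ℝ | ∃ ρ : EuclideanSpace ℝ (Fin k), ‖ρ‖ = 1 ∧
        r = sInf ((fun a => ⟪a, ρ⟫) '' A)} ‖B‖ ∧
      sInf ((fun a => ⟪a, ‖B‖⁻¹ • B⟫) '' A) = ‖B‖ := by
  have hBne : B ≠ 0 := fun h => h0 (h ▸ hB)
  have hBpos : (0 : ℝ) < ‖B‖ := norm_pos_iff.mpr hBne
  have hconv : Convex ℝ (convexHull ℝ A) := convex_convexHull ℝ A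
  -- variational inequality
  haveI : Nonempty ↑(convexHull ℝ A) := ⟨⟨B, hB⟩⟩
  have hiInf : ‖(0 : EuclideanSpace ℝ (Fin k)) - B‖ = ⨅ w : convexHull ℝ A, ‖(0 : EuclideanSpace ℝ (Fin k)) - w‖ := by
    have hbd : BddBelow (Set.range fun w : convexHull ℝ A =>
        ‖(0 : EuclideanSpace ℝ (Fin k)) - (w : EuclideanSpace ℝ (Fin k))‖) := by
      refine ⟨0, ?_⟩
      rintro x ⟨w, rfl⟩
      exact norm_nonneg _
    have h1 : (⨅ w : convexHull ℝ A, ‖(0 : EuclideanSpace ℝ (Fin k)) - (w : EuclideanSpace ℝ (Fin k))‖) ≤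
        ‖(0 : EuclideanSpace ℝ (Fin k)) - B‖ := ciInf_le hbd ⟨B, hB⟩
    have h2 : ‖(0 : EuclideanSpace ℝ (Fin k)) - B‖ ≤
        ⨅ w : convexHull ℝ A, ‖(0 : EuclideanSpace ℝ (Fin k)) - (w : EuclideanSpace ℝ (Fin k))‖ := by
      refine le_ciInf fun w => ?_
      simpa using hBmin w w.2
    exact le_antisymm h2 h1
  have hvar := (norm_eq_iInf_iff_real_inner_le_zero hconv hB).mp hiInf
  have hkey : ∀ y ∈ convexHull ℝ A, ‖B‖ ^ 2 ≤ ⟪y, B⟫ := by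
    intro y hy
    have h2 := hvar y hy
    rw [zero_sub, inner_sub_right, inner_neg_left, inner_neg_left] at h2
    have hBB : ⟪B, B⟫ = ‖B‖ ^ 2 := real_inner_self_eq_norm_sq B
    have hc : ⟪B, y⟫ = ⟪y, B⟫ := (real_inner_comm B y).symm
    linarith
  -- linearity of inner in the first slot
  have hub : ∀ ρ : EuclideanSpace ℝ (Fin k), sInf ((fun a => ⟪a, ρ⟫) '' A) ≤ ⟪B, ρ⟫ := by
    intro ρ
    have hlin : IsLinearMap ℝ (fun a : EuclideanSpace ℝ (Fin k) => ⟪a, ρ⟫) :=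
      ⟨fun x y => inner_add_left x y ρ, fun c x => real_inner_smul_left x ρ c⟩
    have hbdd : BddBelow ((fun a => ⟪a, ρ⟫) '' A) := (hA.image _).bddBelow
    have hsub : convexHull ℝ A ⊆ {w : EuclideanSpace ℝ (Fin k) | sInf ((fun a => ⟪a, ρ⟫) '' A) ≤ ⟪w, ρ⟫} := by
      refine convexHull_min (fun a ha => csInf_le hbdd ⟨a, ha, rfl⟩) ?_
      exact convex_halfSpace_ge hlin _
    exact hsub hB
  -- the attaining ρ
  have hnorm : ‖(‖B‖⁻¹ • B : EuclideanSpace ℝ (Fin k))‖ = 1 := by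
    rw [norm_smul, norm_inv, norm_norm, inv_mul_cancel₀ hBpos.ne']
  have hBB : ⟪B, (‖B‖⁻¹ • B : EuclideanSpace ℝ (Fin k))⟫ = ‖B‖ := by
    rw [real_inner_smul_right, real_inner_self_eq_norm_sq]
    field_simp
  have hlow : ‖B‖ ≤ sInf ((fun a => ⟪a, (‖B‖⁻¹ • B : EuclideanSpace ℝ (Fin k))⟫) '' A) := by
    refine le_csInf (hne.image _) ?_
    rintro b ⟨a, ha, rfl⟩
    have h1 : ‖B‖ ^ 2 ≤ ⟪a, B⟫ := hkey a (subset_convexHull ℝ A ha)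
    show ‖B‖ ≤ ⟪a, ‖B‖⁻¹ • B⟫
    rw [real_inner_smul_right, ← mul_le_mul_iff_right₀ hBpos]
    calc ‖B‖ * ‖B‖ = ‖B‖ ^ 2 := by ring
      _ ≤ ⟪a, B⟫ := h1
      _ = ‖B‖ * (‖B‖⁻¹ * ⟪a, B⟫) := by field_simp
  have heq : sInf ((fun a => ⟪a, (‖B‖⁻¹ • B : EuclideanSpace ℝ (Fin k))⟫) '' A) = ‖B‖ := by
    refine le_antisymm ?_ hlow
    calc sInf _ ≤ ⟪B, (‖B‖⁻¹ • B : EuclideanSpace ℝ (Fin k))⟫ := hub _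
      _ = ‖B‖ := hBB
  refine ⟨⟨⟨‖B‖⁻¹ • B, hnorm, heq.symm⟩, ?_⟩, heq⟩
  rintro r ⟨ρ, hρ, rfl⟩
  calc sInf ((fun a => ⟪a, ρ⟫) '' A) ≤ ⟪B, ρ⟫ := hub ρ
    _ ≤ ‖B‖ * ‖ρ‖ := real_inner_le_norm B ρ
    _ = ‖B‖ := by rw [hρ, mul_one]
end

section
/- Let E = EuclideanSpace ℝ (Fin k), let A ⊆ E be a finite nonempty set with 0 not in convexHull ℝ A, and let B ∈ convexHull ℝ A satisfy ‖B‖ ≤ ‖y‖ for all y in convexHull ℝ A. If ρ ∈ E satisfies ‖ρ‖ = 1 and ⟪a, ρ⟫ ≥ ‖B‖ for all a ∈ A, then ρ = ‖B‖⁻¹ • B. (Uniqueness, up to positive scaling, of the maximally destabilising one-parameter subgroup of an unstable point for a torus action: the adapted one-parameter subgroup is the one obtained by exponentiating the closest point B(x) of the state polytope to the origin.) -/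
open scoped RealInnerProductSpace

/-- **Uniqueness of the maximally destabilising one-parameter subgroup for a torus action**:
if the origin does not lie in the convex hull of the finite nonempty set of weights `A`,
`B` is the closest point of the hull to the origin, and `ρ` is a unit vector with
`⟪a, ρ⟫ ≥ ‖B‖` for all `a ∈ A`, then `ρ = ‖B‖⁻¹ • B`. -/
theorem stmt_4 (k : ℕ) (A : Set (EuclideanSpace ℝ (Fin k))) (hA : A.Finite)
    (hne : A.Nonempty) (h0 : (0 : EuclideanSpace ℝ (Fin k)) ∉ convexHull ℝ A)
    (B : EuclideanSpace ℝ (Fin k)) (hB : B ∈ convexHull ℝ A)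
    (hBmin : ∀ y ∈ convexHull ℝ A, ‖B‖ ≤ ‖y‖)
    (ρ : EuclideanSpace ℝ (Fin k)) (hρ : ‖ρ‖ = 1)
    (hdestab : ∀ a ∈ A, ‖B‖ ≤ ⟪a, ρ⟫) :
    ρ = ‖B‖⁻¹ • B := by
  have hBne : B ≠ 0 := fun h => h0 (h ▸ hB)
  have hBnorm : (0:ℝ) < ‖B‖ := norm_pos_iff.mpr hBne
  -- extend hdestab to the hull
  have hhull : ∀ y ∈ convexHull ℝ A, ‖B‖ ≤ ⟪y, ρ⟫ := by
    intro y hy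
    have hconv : Convex ℝ {x : EuclideanSpace ℝ (Fin k) | ‖B‖ ≤ ⟪x, ρ⟫} :=
      convex_halfSpace_ge ⟨fun x y => inner_add_left x y ρ, fun c x => real_inner_smul_left x ρ c⟩ ‖B‖
    exact convexHull_min hdestab hconv hy
  have h1 : ‖B‖ ≤ ⟪B, ρ⟫ := hhull B hB
  have h2 : ⟪B, ρ⟫ ≤ ‖B‖ * ‖ρ‖ := real_inner_le_norm B ρ
  have heq : ⟪B, ρ⟫ = ‖B‖ * ‖ρ‖ := by
    rw [hρ] at h2 ⊢; linarith
  have := (inner_eq_norm_mul_iff_real).mp heq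
  rw [hρ, one_smul] at this
  rw [this]
  rw [norm_smul, Real.norm_of_nonneg hBnorm.le, hρ, mul_one, smul_smul,
    inv_mul_cancel₀ hBnorm.ne', one_smul]
end

section
/- Let α : Fin (n+1) → ℤ be a weight vector and let x : Fin (n+1) → ℂ be nonzero. Let m be the minimum of α i over the support {i | x i ≠ 0}, and define y : Fin (n+1) → ℂ by y i = x i if α i = m and y i = 0 otherwise. Then y ≠ 0, and the map sending a nonzero t ∈ ℂ to the projective class of (fun i => t ^ (α i) * x i) in ℙⁿ(ℂ) tends, as t tends to 0 within ℂ \ {0}, to the projective class of y. (Existence and identification of the Białynicki-Birula limit p(x) = lim_{t→0} λ(t)·x for a diagonal 𝔾_m-action on projective space: the limit is supported exactly on the minimal-weight coordinates of the support of x.) -/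
open scoped LinearAlgebra.Projectivization RealInnerProductSpace

/-- The quotient topology on the projectivization of `Fin (n+1) → ℂ`. -/
noncomputable instance projTop {n : ℕ} : TopologicalSpace (ℙ ℂ (Fin (n + 1) → ℂ)) :=
  inferInstanceAs (TopologicalSpace (Quotient (projectivizationSetoid ℂ (Fin (n + 1) → ℂ))))

/-- For `t ≠ 0` and `x ≠ 0`, the coordinate-wise scaled vector `i ↦ t ^ (α i) * x i`
is nonzero. -/
theorem scale_ne_zero {n : ℕ} (α : Fin (n + 1) → ℤ) {x : Fin (n + 1) → ℂ} (hx : x ≠ 0)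
    {t : ℂ} (ht : t ≠ 0) : (fun i => t ^ (α i) * x i) ≠ 0 := by
  obtain ⟨i, hi⟩ := Function.ne_iff.mp hx
  intro h
  have h2 := congrFun h i
  simp only [Pi.zero_apply, mul_eq_zero] at h2
  rcases h2 with h2 | h2
  · exact absurd h2 (zpow_ne_zero _ ht)
  · exact hi (by simpa using h2)

/-- **Białynicki-Birula limit for a diagonal `𝔾ₘ`-action on projective space**: for a
weight vector `α`, a nonzero point `x`, and `m` the minimum of `α` over the support of
`x`, the vector `y` keeping exactly the minimal-weight coordinates of the support of `x`
is nonzero, and the projective class of `i ↦ t ^ (α i) * x i` tends to the class of `y`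
as `t → 0` within `ℂ \ {0}`. -/
theorem stmt_5 {n : ℕ} (α : Fin (n + 1) → ℤ) (x : Fin (n + 1) → ℂ) (hx : x ≠ 0)
    (m : ℤ) (hm : IsLeast {z : ℤ | ∃ i, x i ≠ 0 ∧ α i = z} m)
    (y : Fin (n + 1) → ℂ) (hy : y = fun i => if α i = m then x i else 0)
    (f : ℂ → ℙ ℂ (Fin (n + 1) → ℂ))
    (hf : ∀ (t : ℂ) (ht : t ≠ 0),
      f t = Projectivization.mk ℂ (fun i => t ^ (α i) * x i) (scale_ne_zero α hx ht)) :
    ∃ hy0 : y ≠ 0,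
      Filter.Tendsto f (nhdsWithin 0 {0}ᶜ) (nhds (Projectivization.mk ℂ y hy0)) := by

  obtain ⟨⟨i0, hxi0, hαi0⟩, hlb⟩ := hm
  have hy0 : y ≠ 0 := by
    intro h
    apply hxi0
    have h2 := congrFun h i0
    rw [hy] at h2
    simpa [hαi0] using h2
  refine ⟨hy0, ?_⟩
  set g : ℂ → (Fin (n + 1) → ℂ) := fun t i => t ^ (α i - m) * x i with hg
  have hg0 : g 0 = y := by
    funext i
    by_cases hi : α i = m
    · simp [hg, hi, hy]
    · have : α i - m ≠ 0 := sub_ne_zero.mpr hi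
      simp [hg, hi, hy, zero_zpow _ this]
  have hgne : ∀ t, g t ≠ 0 := by
    intro t
    by_cases ht : t = 0
    · rw [ht, hg0]; exact hy0
    · exact scale_ne_zero (fun i => α i - m) hx ht
  set G : ℂ → { v : Fin (n + 1) → ℂ // v ≠ 0 } := fun t => ⟨g t, hgne t⟩ with hG
  have hgt : Filter.Tendsto g (nhdsWithin 0 {0}ᶜ) (nhds y) := by
    rw [tendsto_pi_nhds]
    intro i
    by_cases hxi : x i = 0
    · have hyi : y i = 0 := by rw [hy]; simp [hxi]
      rw [hyi]
      have : ∀ t : ℂ, g t i = 0 := by intro t; simp [hg, hxi]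
      simpa [this] using tendsto_const_nhds
    · by_cases hi : α i = m
      · have hyi : y i = x i := by rw [hy]; simp [hi]
        rw [hyi]
        apply Filter.Tendsto.congr' (f₁ := fun _ => x i)
        · filter_upwards [self_mem_nhdsWithin] with t ht
          simp [hg, hi]
        · exact tendsto_const_nhds
      · have hyi : y i = 0 := by rw [hy]; simp [hi]
        have hpos : 0 < α i - m := by
          have := hlb ⟨i, hxi, rfl⟩
          omega
        rw [hyi]
        have h1 : Filter.Tendsto (fun t : ℂ => t ^ (α i - m)) (nhdsWithin 0 {0}ᶜ) (nhds 0) := by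
          have hk : ∀ t : ℂ, t ^ (α i - m) = t ^ (α i - m).toNat := by
            intro t
            rw [← zpow_natCast]
            congr 1
            omega
          simp only [hk]
          have h0 : Filter.Tendsto (fun t : ℂ => t ^ (α i - m).toNat) (nhds 0) (nhds 0) := by
            simpa [zero_pow (show (α i - m).toNat ≠ 0 by omega)] using
              (continuous_pow (α i - m).toNat).tendsto (0 : ℂ)
          exact h0.mono_left nhdsWithin_le_nhds
        have := h1.mul (tendsto_const_nhds (x := x i))
        simpa [hg] using this
  have hGt : Filter.Tendsto G (nhdsWithin 0 {0}ᶜ) (nhds ⟨y, hy0⟩) := by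
    rw [tendsto_subtype_rng]
    exact hgt
  have hcont : Continuous (Quotient.mk'' :
      { v : Fin (n + 1) → ℂ // v ≠ 0 } → ℙ ℂ (Fin (n + 1) → ℂ)) :=
    continuous_quotient_mk'
  have hcomp : Filter.Tendsto (fun t => Quotient.mk'' (G t)) (nhdsWithin 0 {0}ᶜ)
      (nhds (Projectivization.mk ℂ y hy0)) :=
    (hcont.tendsto _).comp hGt
  apply Filter.Tendsto.congr' _ hcomp
  filter_upwards [self_mem_nhdsWithin] with t ht
  have ht : t ≠ 0 := ht
  rw [hf t ht]
  show Projectivization.mk ℂ (g t) (hgne t) = _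
  rw [Projectivization.mk_eq_mk_iff]
  refine ⟨Units.mk0 (t ^ (-m)) (zpow_ne_zero _ ht), ?_⟩
  funext i
  show t ^ (-m) * (t ^ (α i) * x i) = t ^ (α i - m) * x i
  rw [← mul_assoc, ← zpow_add₀ ht]
  ring_nf
end

section
/- Let α : Fin (n+1) → ℤ be a weight vector, let m₀ be the minimum of α i over all i ∈ Fin (n+1), and let x : Fin (n+1) → ℂ be nonzero. Then the limit, as t tends to 0 within ℂ \ {0}, of the projective class of (fun i => t ^ (α i) * x i) lies in the projectivized minimal weight space {[z] ∈ ℙⁿ(ℂ) | z i = 0 whenever α i ≠ m₀} if and only if there exists i with x i ≠ 0 and α i = m₀. (The basin of attraction X_min⁰ of the minimal fixed-point component X_min for the diagonal 𝔾_m-action on ℙⁿ, i.e. p⁻¹(X_min), is exactly the set of points having a nonzero coordinate in the minimal weight space.) -/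
open scoped LinearAlgebra.Projectivization RealInnerProductSpace

/-- **The basin of attraction of the minimal fixed-point component**: for the diagonal
`𝔾ₘ`-action on `ℙⁿ` with weights `α` and global minimal weight `m₀`, the limit as
`t → 0` of the class of `i ↦ t ^ (α i) * x i` lies in the projectivized minimal weight
space `X_min` (points whose representatives vanish on all coordinates of non-minimal
weight) if and only if `x` has a nonzero coordinate of minimal weight. -/
theorem stmt_6 {n : ℕ} (α : Fin (n + 1) → ℤ) (m₀ : ℤ) (hm₀ : IsLeast (Set.range α) m₀)
    (x : Fin (n + 1) → ℂ) (hx : x ≠ 0)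
    (f : ℂ → ℙ ℂ (Fin (n + 1) → ℂ))
    (hf : ∀ (t : ℂ) (ht : t ≠ 0),
      f t = Projectivization.mk ℂ (fun i => t ^ (α i) * x i) (scale_ne_zero α hx ht)) :
    ∃ L : ℙ ℂ (Fin (n + 1) → ℂ),
      Filter.Tendsto f (nhdsWithin 0 {0}ᶜ) (nhds L) ∧
        (L ∈ {p : ℙ ℂ (Fin (n + 1) → ℂ) | ∀ i, α i ≠ m₀ → p.rep i = 0} ↔
          ∃ i, x i ≠ 0 ∧ α i = m₀) := by
  classical
  obtain ⟨i₀, hx0, hmin⟩ : ∃ i₀, x i₀ ≠ 0 ∧ ∀ j, x j ≠ 0 → α i₀ ≤ α j := by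
    obtain ⟨i, hi⟩ := Function.ne_iff.mp hx
    obtain ⟨i₀, hi₀, hmin⟩ := Finset.exists_min_image
      (Finset.univ.filter fun i => x i ≠ 0) α ⟨i, by simpa using hi⟩
    exact ⟨i₀, by simpa using hi₀, fun j hj => hmin j (by simpa using hj)⟩
  set m := α i₀ with hm
  set g : ℂ → Fin (n + 1) → ℂ := fun t i => t ^ ((α i - m).toNat) * x i with hg
  have hk0 : (α i₀ - m).toNat = 0 := by simp [hm]
  have hgne : ∀ t, g t ≠ 0 := by
    intro t h
    have h2 := congrFun h i₀
    simp only [hg, hk0, pow_zero, one_mul, Pi.zero_apply] at h2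
    exact hx0 h2
  set L : ℙ ℂ (Fin (n + 1) → ℂ) := Projectivization.mk ℂ (g 0) (hgne 0) with hL
  -- g 0 vanishes at all non-minimal coordinates (of the support)
  have hg0 : ∀ i, g 0 i = if (α i - m).toNat = 0 then x i else 0 := by
    intro i
    by_cases h : (α i - m).toNat = 0
    · simp [hg, h]
    · simp [hg, h, zero_pow h]
  refine ⟨L, ?_, ?_⟩
  · -- Tendsto
    have hGcont : Continuous fun t => (⟨g t, hgne t⟩ : { v : Fin (n + 1) → ℂ // v ≠ 0 }) := by
      refine Continuous.subtype_mk ?_ _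
      refine continuous_pi fun i => ?_
      exact (continuous_pow _).mul continuous_const
    have hFcont : Continuous fun t => Projectivization.mk ℂ (g t) (hgne t) := by
      exact continuous_quotient_mk'.comp hGcont
    have htend : Filter.Tendsto (fun t => Projectivization.mk ℂ (g t) (hgne t))
        (nhdsWithin 0 {0}ᶜ) (nhds L) := by
      exact (hFcont.tendsto 0).mono_left nhdsWithin_le_nhds
    refine htend.congr' ?_
    filter_upwards [self_mem_nhdsWithin] with t ht
    have ht0 : t ≠ 0 := ht
    rw [hf t ht0]
    rw [Projectivization.mk_eq_mk_iff]
    refine ⟨Units.mk0 (t ^ (-m)) (zpow_ne_zero _ ht0), ?_⟩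
    funext i
    show (t ^ (-m) : ℂ) * (t ^ (α i) * x i) = g t i
    by_cases hxi : x i = 0
    · simp [hg, hxi]
    · have hle : m ≤ α i := hmin i hxi
      have h1 : (t : ℂ) ^ ((α i - m).toNat) = t ^ (α i - m) := by
        rw [← zpow_natCast, Int.toNat_of_nonneg (by omega)]
      have he : -m + α i = α i - m := by ring
      simp only [hg]
      rw [h1, ← mul_assoc, ← zpow_add₀ ht0, he]
  · -- characterization
    obtain ⟨a, ha⟩ : ∃ a : ℂˣ, a • (g 0) = L.rep :=
      (Projectivization.mk_eq_mk_iff ℂ L.rep (g 0) L.rep_nonzero (hgne 0)).mp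
        (by rw [Projectivization.mk_rep])
    have hrep : ∀ i, L.rep i = (a : ℂ) * g 0 i := by
      intro i; rw [← ha]; rfl
    have hm₀le : ∀ i, m₀ ≤ α i := fun i => hm₀.2 ⟨i, rfl⟩
    constructor
    · intro hmem
      by_contra hcon
      push_neg at hcon
      have hne : α i₀ ≠ m₀ := fun h => hcon i₀ hx0 h
      have := hmem i₀ hne
      rw [hrep i₀, hg0 i₀, if_pos hk0] at this
      exact (mul_ne_zero a.ne_zero hx0) this
    · rintro ⟨j, hj, hjm⟩ i hi
      have hmm₀ : m = m₀ := le_antisymm (hjm ▸ hmin j hj) (hm₀le i₀)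
      rw [hrep i, hg0 i]
      have : (α i - m).toNat ≠ 0 := by
        have := hm₀le i
        omega
      rw [if_neg this, mul_zero]
end

section
/- Let E = EuclideanSpace ℝ (Fin k), let α : Fin (n+1) → E be a family of weight vectors, and let β ∈ E. Then the set Y_β = { [x] ∈ ℙⁿ(ℂ) | (for all i, x i ≠ 0 implies ⟪α i, β⟫ ≥ ‖β‖²) and (there exists i with x i ≠ 0 and ⟪α i, β⟫ = ‖β‖²) } is a locally closed subset of ℙⁿ(ℂ), i.e. the intersection of an open set and a closed set. (For a linear torus action, the subvariety Y_β of points all of whose support weights lie in the half-space H_β⁺ with at least one support weight on the hyperplane H_β is locally closed.) -/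
open scoped LinearAlgebra.Projectivization RealInnerProductSpace

lemma rep_zero_iff {n : ℕ} (v : { v : Fin (n + 1) → ℂ // v ≠ 0 }) (i : Fin (n + 1)) :
    (Projectivization.mk ℂ v.1 v.2).rep i = 0 ↔ v.1 i = 0 := by
  obtain ⟨a, ha⟩ := Projectivization.exists_smul_eq_mk_rep ℂ v.1 v.2
  rw [← ha]
  simp [Pi.smul_apply, Units.smul_def, smul_eq_mul, mul_eq_zero, Units.ne_zero a]

lemma quotmap {n : ℕ} : Topology.IsQuotientMap
    (fun v : { v : Fin (n + 1) → ℂ // v ≠ 0 } => Projectivization.mk ℂ v.1 v.2) :=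
  isQuotientMap_quot_mk

lemma isClosed_rep_zero {n : ℕ} (i : Fin (n + 1)) :
    IsClosed {p : ℙ ℂ (Fin (n + 1) → ℂ) | p.rep i = 0} := by
  rw [← quotmap.isClosed_preimage]
  have : (fun v : { v : Fin (n + 1) → ℂ // v ≠ 0 } => Projectivization.mk ℂ v.1 v.2) ⁻¹'
      {p : ℙ ℂ (Fin (n + 1) → ℂ) | p.rep i = 0} = {v | v.1 i = 0} := by
    ext v; exact rep_zero_iff v i
  rw [this]
  exact isClosed_eq ((continuous_apply i).comp continuous_subtype_val) continuous_const

/-- **The subvariety `Y_β` is locally closed**: for a linear torus action on `ℙⁿ` with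
weights `α i` in Euclidean space, the set of points all of whose support weights lie in
the half-space `H_β⁺ = {v | ⟪v, β⟫ ≥ ‖β‖²}` with at least one support weight on the
hyperplane `H_β = {v | ⟪v, β⟫ = ‖β‖²}` is a locally closed subset of `ℙⁿ(ℂ)`. -/
theorem stmt_9 (n k : ℕ) (α : Fin (n + 1) → EuclideanSpace ℝ (Fin k))
    (β : EuclideanSpace ℝ (Fin k)) :
    IsLocallyClosed {p : ℙ ℂ (Fin (n + 1) → ℂ) |
      (∀ i, p.rep i ≠ 0 → ‖β‖ ^ 2 ≤ ⟪α i, β⟫) ∧ ∃ i, p.rep i ≠ 0 ∧ ⟪α i, β⟫ = ‖β‖ ^ 2} := by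
  have hU : IsOpen {p : ℙ ℂ (Fin (n + 1) → ℂ) | ∃ i, p.rep i ≠ 0 ∧ ⟪α i, β⟫ = ‖β‖ ^ 2} := by
    have : {p : ℙ ℂ (Fin (n + 1) → ℂ) | ∃ i, p.rep i ≠ 0 ∧ ⟪α i, β⟫ = ‖β‖ ^ 2} =
        ⋃ i ∈ {i | ⟪α i, β⟫ = ‖β‖ ^ 2}, {p : ℙ ℂ (Fin (n + 1) → ℂ) | p.rep i = 0}ᶜ := by
      ext p; simp [Set.mem_setOf_eq, and_comm]
    rw [this]
    exact isOpen_biUnion fun i _ => (isClosed_rep_zero i).isOpen_compl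
  have hC : IsClosed {p : ℙ ℂ (Fin (n + 1) → ℂ) | ∀ i, p.rep i ≠ 0 → ‖β‖ ^ 2 ≤ ⟪α i, β⟫} := by
    have : {p : ℙ ℂ (Fin (n + 1) → ℂ) | ∀ i, p.rep i ≠ 0 → ‖β‖ ^ 2 ≤ ⟪α i, β⟫} =
        ⋂ i ∈ {i | ¬ ‖β‖ ^ 2 ≤ ⟪α i, β⟫}, {p : ℙ ℂ (Fin (n + 1) → ℂ) | p.rep i = 0} := by
      ext p
      simp only [Set.mem_setOf_eq, Set.mem_iInter]
      constructor
      · intro h i hi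
        by_contra hne
        exact hi (h i hne)
      · intro h i hne
        by_contra hi
        exact hne (h i hi)
    rw [this]
    exact isClosed_biInter fun i _ => isClosed_rep_zero i
  have : {p : ℙ ℂ (Fin (n + 1) → ℂ) |
      (∀ i, p.rep i ≠ 0 → ‖β‖ ^ 2 ≤ ⟪α i, β⟫) ∧ ∃ i, p.rep i ≠ 0 ∧ ⟪α i, β⟫ = ‖β‖ ^ 2} =
      {p : ℙ ℂ (Fin (n + 1) → ℂ) | ∃ i, p.rep i ≠ 0 ∧ ⟪α i, β⟫ = ‖β‖ ^ 2} ∩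
      {p : ℙ ℂ (Fin (n + 1) → ℂ) | ∀ i, p.rep i ≠ 0 → ‖β‖ ^ 2 ≤ ⟪α i, β⟫} := by
    ext p; simp [Set.mem_setOf_eq, and_comm]
  rw [this]
  exact ⟨_, _, hU, hC, rfl⟩
end

section
/- Let α : Fin (n+1) → ℤ be a weight vector which is not constant, let α_min be its minimum over Fin (n+1), and let α₂ be the minimum of α i over those i with α i ≠ α_min. Let c ∈ ℚ satisfy α_min < c < α₂ (an adapted character). Then for every nonzero x : Fin (n+1) → ℂ, the following are equivalent: (i) min{ α i | x i ≠ 0 } < c and c < max{ α i | x i ≠ 0 }; (ii) there exists i with x i ≠ 0 and α i = α_min, and there exists j with x j ≠ 0 and α j ≠ α_min. In particular the locus described by (i) is the same for every adapted c. (For an adapted linearisation, the 𝔾_m-stable locus of ℙⁿ equals p⁻¹(X_min) \ X_min, and in particular is independent of the choice of ample well-adapted linearisation; this is the key step in the proof that X∥_𝓛 Û is independent of the well-adapted linearisation 𝓛.) -/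
/-- **Independence of the 𝔾ₘ-stable locus from the choice of adapted character**: let
`α` be a non-constant weight vector for the diagonal `𝔾ₘ`-action on `ℙⁿ`, with global
minimum `αmin` and second-lowest weight value `α₂`, and let `c` be an adapted rational
character, i.e. `αmin < c < α₂`. Then for every nonzero `x`, the Hilbert–Mumford stability
condition (the minimum of `α` over the support of `x` is `< c` and the maximum is `> c`)
holds if and only if `x` has a nonzero coordinate of minimal weight and a nonzero
coordinate of non-minimal weight; in particular the stable locus `p⁻¹(X_min) \ X_min` is
the same for every adapted `c`. -/
theorem stmt_11 {n : ℕ} (α : Fin (n + 1) → ℤ) (hnc : ∃ i j, α i ≠ α j)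
    (αmin : ℤ) (hαmin : IsLeast (Set.range α) αmin)
    (α₂ : ℤ) (hα₂ : IsLeast {z : ℤ | ∃ i, α i = z ∧ z ≠ αmin} α₂)
    (c : ℚ) (hc1 : (αmin : ℚ) < c) (hc2 : c < (α₂ : ℚ))
    (x : Fin (n + 1) → ℂ) (hx : x ≠ 0) :
    ((∃ i, x i ≠ 0 ∧ (α i : ℚ) < c) ∧ (∃ j, x j ≠ 0 ∧ c < (α j : ℚ))) ↔
      ((∃ i, x i ≠ 0 ∧ α i = αmin) ∧ (∃ j, x j ≠ 0 ∧ α j ≠ αmin)) := by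
  constructor
  · rintro ⟨⟨i, hxi, hi⟩, ⟨j, hxj, hj⟩⟩
    refine ⟨⟨i, hxi, ?_⟩, ⟨j, hxj, ?_⟩⟩
    · by_contra hne
      have : (α₂ : ℚ) ≤ (α i : ℚ) := by
        exact_mod_cast hα₂.2 ⟨i, rfl, hne⟩
      linarith
    · intro heq
      rw [heq] at hj
      linarith
  · rintro ⟨⟨i, hxi, hi⟩, ⟨j, hxj, hj⟩⟩
    refine ⟨⟨i, hxi, by rw [hi]; exact hc1⟩, ⟨j, hxj, ?_⟩⟩
    have : (α₂ : ℚ) ≤ (α j : ℚ) := by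
      exact_mod_cast hα₂.2 ⟨j, rfl, hj⟩
    linarith
end

section
/- Let E = EuclideanSpace ℝ (Fin k) and let α : Fin (n+1) → E be a family of weight vectors. For nonzero x : Fin (n+1) → ℂ, let β(x) denote the unique point of minimal norm of the nonempty compact convex set convexHull ℝ {α i | x i ≠ 0}. Then for every β₀ ∈ E, the closure in ℙⁿ(ℂ) of the stratum S_{β₀} = { [x] | β(x) = β₀ } is contained in { [x] | ‖β(x)‖ ≥ ‖β₀‖ }. (The closure of a stratum S_β of the β-stratification meets only strata S_γ with ‖γ‖ ≥ ‖β‖; this is the closure property in Kirwan's stratification theorem, in the case of a torus acting diagonally on ℙⁿ.) -/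
open scoped LinearAlgebra.Projectivization RealInnerProductSpace

lemma rep_ne_zero_iff {n : ℕ} (y : Fin (n + 1) → ℂ) (hy : y ≠ 0) (i : Fin (n + 1)) :
    (Projectivization.mk ℂ y hy).rep i ≠ 0 ↔ y i ≠ 0 := by
  obtain ⟨a, ha⟩ := (Projectivization.mk_eq_mk_iff ℂ _ _
    (Projectivization.rep_nonzero _) hy).mp (Projectivization.mk_rep _)
  have : (Projectivization.mk ℂ y hy).rep i = (a : ℂ) * y i := by
    rw [← ha]; rfl
  rw [this, mul_ne_zero_iff]
  exact ⟨fun h => h.2, fun h => ⟨a.ne_zero, h⟩⟩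

/-- **Closure property of the β-stratification** (Kirwan), for a torus acting diagonally on
`ℙⁿ`: let `b` assign to each point of `ℙⁿ(ℂ)` the closest point to the origin of the
convex hull of its support weights (the point `β(x)` of minimal norm of the state
polytope). Then the closure of the stratum `S_{β₀} = {[x] | β(x) = β₀}` is contained in
`{[x] | ‖β(x)‖ ≥ ‖β₀‖}`. -/
theorem stmt_12 (n k : ℕ) (α : Fin (n + 1) → EuclideanSpace ℝ (Fin k))
    (b : ℙ ℂ (Fin (n + 1) → ℂ) → EuclideanSpace ℝ (Fin k))
    (hb : ∀ (x : Fin (n + 1) → ℂ) (hx : x ≠ 0),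
      b (Projectivization.mk ℂ x hx) ∈
          convexHull ℝ {v : EuclideanSpace ℝ (Fin k) | ∃ i, x i ≠ 0 ∧ α i = v} ∧
        ∀ y ∈ convexHull ℝ {v : EuclideanSpace ℝ (Fin k) | ∃ i, x i ≠ 0 ∧ α i = v},
          ‖b (Projectivization.mk ℂ x hx)‖ ≤ ‖y‖)
    (β₀ : EuclideanSpace ℝ (Fin k)) :
    closure {p : ℙ ℂ (Fin (n + 1) → ℂ) | b p = β₀} ⊆
      {p : ℙ ℂ (Fin (n + 1) → ℂ) | ‖β₀‖ ≤ ‖b p‖} := by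
  intro p hp
  set x : Fin (n + 1) → ℂ := p.rep with hxdef
  have hx : x ≠ 0 := p.rep_nonzero
  -- The set of points whose support contains the support of `x` is open.
  set U : Set (ℙ ℂ (Fin (n + 1) → ℂ)) := {q | ∀ i, x i ≠ 0 → q.rep i ≠ 0} with hUdef
  have hUopen : IsOpen U := by
    letI : Setoid {v : Fin (n + 1) → ℂ // v ≠ 0} :=
      projectivizationSetoid ℂ (Fin (n + 1) → ℂ)
    have hq : Topology.IsQuotientMap
        (Quotient.mk' : {v : Fin (n + 1) → ℂ // v ≠ 0} → ℙ ℂ (Fin (n + 1) → ℂ)) :=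
      isQuotientMap_quotient_mk'
    refine hq.isOpen_preimage.mp ?_
    have : (Quotient.mk' : {v : Fin (n + 1) → ℂ // v ≠ 0} → ℙ ℂ (Fin (n + 1) → ℂ)) ⁻¹' U
        = ⋂ i ∈ Finset.univ.filter (fun i => x i ≠ 0),
            {v : {v : Fin (n + 1) → ℂ // v ≠ 0} | v.val i ≠ 0} := by
      ext v
      simp only [Set.mem_preimage, Set.mem_iInter, Set.mem_setOf_eq, hUdef,
        Finset.mem_filter, Finset.mem_univ, true_and]
      constructor
      · intro h i hi
        have := h i hi
        rwa [show (Quotient.mk' v : ℙ ℂ (Fin (n + 1) → ℂ))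
            = Projectivization.mk ℂ v.val v.prop from rfl, rep_ne_zero_iff] at this
      · intro h i hi
        rw [show (Quotient.mk' v : ℙ ℂ (Fin (n + 1) → ℂ))
            = Projectivization.mk ℂ v.val v.prop from rfl, rep_ne_zero_iff]
        exact h i hi
    rw [this]
    refine isOpen_biInter_finset fun i _ => ?_
    exact isOpen_ne.preimage ((continuous_apply i).comp continuous_subtype_val)
  have hpU : p ∈ U := fun i hi => hi
  obtain ⟨q, hqU, hqS⟩ := mem_closure_iff.mp hp U hUopen hpU
  have hsub : {v : EuclideanSpace ℝ (Fin k) | ∃ i, x i ≠ 0 ∧ α i = v}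
      ⊆ {v : EuclideanSpace ℝ (Fin k) | ∃ i, q.rep i ≠ 0 ∧ α i = v} := by
    rintro v ⟨i, hi, hv⟩
    exact ⟨i, hqU i hi, hv⟩
  have h1 := (hb x hx).1
  have h2 := (hb q.rep q.rep_nonzero).2
  rw [Projectivization.mk_rep] at h1 h2
  have := h2 (b p) (convexHull_mono hsub h1)
  rw [hqS] at this
  exact this
end

section
/- Let E = EuclideanSpace ℝ (Fin k) and let α : Fin (n+1) → E be a family of weight vectors. Then the set { [x] ∈ ℙⁿ(ℂ) | 0 ∈ convexHull ℝ {α i | x i ≠ 0} } is an open subset of ℙⁿ(ℂ). (The semistable locus S_0 = X^{ss} is the open stratum of the β-stratification; this is the openness assertion of Kirwan's stratification theorem for a torus acting diagonally on ℙⁿ, combined with the torus Hilbert–Mumford criterion identifying semistability with 0 lying in the state polytope.) -/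
open scoped LinearAlgebra.Projectivization RealInnerProductSpace

lemma aux_open (n k : ℕ) (α : Fin (n + 1) → EuclideanSpace ℝ (Fin k)) :
    IsOpen {x : Fin (n + 1) → ℂ |
      (0 : EuclideanSpace ℝ (Fin k)) ∈
        convexHull ℝ {v : EuclideanSpace ℝ (Fin k) | ∃ i, x i ≠ 0 ∧ α i = v}} := by
  rw [isOpen_iff_mem_nhds]
  intro x hx
  have hU : IsOpen {y : Fin (n + 1) → ℂ | ∀ i, x i ≠ 0 → y i ≠ 0} := by
    have h : {y : Fin (n + 1) → ℂ | ∀ i, x i ≠ 0 → y i ≠ 0}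
        = ⋂ i, {y | x i ≠ 0 → y i ≠ 0} := by
      ext y; simp [Set.mem_iInter]
    rw [h]
    refine isOpen_iInter_of_finite fun i => ?_
    by_cases h0 : x i = 0
    · simp [h0]
    · have h1 : {y : Fin (n + 1) → ℂ | x i ≠ 0 → y i ≠ 0} = {y | y i ≠ 0} := by
        ext y; simp [h0]
      rw [h1]
      exact isOpen_ne.preimage (continuous_apply i)
  refine Filter.mem_of_superset (hU.mem_nhds fun i h => h) ?_
  intro y hy
  refine convexHull_mono ?_ hx
  rintro v ⟨i, hi, hv⟩
  exact ⟨i, hy i hi, hv⟩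

lemma rep_support {n : ℕ} (x : {v : Fin (n + 1) → ℂ // v ≠ 0}) (i : Fin (n + 1)) :
    (Projectivization.mk ℂ x.1 x.2).rep i ≠ 0 ↔ x.1 i ≠ 0 := by
  set p := Projectivization.mk ℂ x.1 x.2 with hp
  have h : Projectivization.mk ℂ p.rep p.rep_nonzero = Projectivization.mk ℂ x.1 x.2 :=
    p.mk_rep
  rw [Projectivization.mk_eq_mk_iff] at h
  obtain ⟨a, ha⟩ := h
  constructor
  · intro h1 h2
    apply h1
    rw [← ha]
    simp [h2]
  · intro h1 h2
    apply h1
    rw [← ha] at h2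
    have h3 : a • x.1 i = 0 := h2
    rw [Units.smul_def] at h3
    exact (mul_eq_zero.mp h3).resolve_left a.ne_zero

/-- **Openness of the semistable locus** (the open stratum `S₀ = Xˢˢ` of the
β-stratification) for a torus acting diagonally on `ℙⁿ`: by the torus Hilbert–Mumford
criterion, the semistable locus is the set of points whose state polytope (the convex hull
of the support weights) contains the origin, and this set is open in `ℙⁿ(ℂ)`. -/
theorem stmt_13 (n k : ℕ) (α : Fin (n + 1) → EuclideanSpace ℝ (Fin k)) :
    IsOpen {p : ℙ ℂ (Fin (n + 1) → ℂ) |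
      (0 : EuclideanSpace ℝ (Fin k)) ∈
        convexHull ℝ {v : EuclideanSpace ℝ (Fin k) | ∃ i, p.rep i ≠ 0 ∧ α i = v}} := by
  letI : Setoid {v : Fin (n + 1) → ℂ // v ≠ 0} :=
    projectivizationSetoid ℂ (Fin (n + 1) → ℂ)
  rw [show (projTop : TopologicalSpace (ℙ ℂ (Fin (n + 1) → ℂ))) =
    instTopologicalSpaceQuotient from rfl]
  change @IsOpen (Quotient (projectivizationSetoid ℂ (Fin (n + 1) → ℂ))) instTopologicalSpaceQuotient _
  refine isQuotientMap_quotient_mk'.isOpen_preimage.mp ?_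
  have hEq : (Quotient.mk' ⁻¹'
      {p : ℙ ℂ (Fin (n + 1) → ℂ) |
        (0 : EuclideanSpace ℝ (Fin k)) ∈
          convexHull ℝ {v : EuclideanSpace ℝ (Fin k) | ∃ i, p.rep i ≠ 0 ∧ α i = v}})
      = Subtype.val ⁻¹' {x : Fin (n + 1) → ℂ |
        (0 : EuclideanSpace ℝ (Fin k)) ∈
          convexHull ℝ {v : EuclideanSpace ℝ (Fin k) | ∃ i, x i ≠ 0 ∧ α i = v}} := by
    ext x
    have : ∀ i, (Projectivization.mk ℂ x.1 x.2).rep i ≠ 0 ↔ x.1 i ≠ 0 :=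
      rep_support x
    simp only [Set.mem_preimage, Set.mem_setOf_eq]
    constructor
    · intro h
      refine convexHull_mono ?_ h
      rintro v ⟨i, hi, hv⟩
      exact ⟨i, (this i).mp hi, hv⟩
    · intro h
      refine convexHull_mono ?_ h
      rintro v ⟨i, hi, hv⟩
      exact ⟨i, (this i).mpr hi, hv⟩
  exact hEq ▸ (aux_open n k α).preimage continuous_subtype_val
end

section
/- Let E = EuclideanSpace ℝ (Fin k), let α : Fin (n+1) → E, let β ∈ E with β ≠ 0, and let x : Fin (n+1) → ℂ be nonzero with ⟪α i, β⟫ ≥ ‖β‖² for every i with x i ≠ 0 (i.e. all support weights lie in the half-space H_β⁺). Then β is the point of minimal norm of convexHull ℝ {α i | x i ≠ 0} if and only if β belongs to convexHull ℝ {α i | x i ≠ 0 and ⟪α i, β⟫ = ‖β‖²}. (For a point of Y_β, the one-parameter subgroup λ_β is adapted to x exactly when it is adapted to the limit point p_β(x) ∈ Z_β, whose support weights are the support weights of x lying on H_β; equivalently, Y_β^{ss} = p_β^{-1}(Z_β^{ss}).) -/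
open scoped RealInnerProductSpace

/-- **`Y_β^{ss} = p_β⁻¹(Z_β^{ss})`**: let `x` be a nonzero point all of whose support
weights lie in the half-space `H_β⁺ = {v | ⟪v, β⟫ ≥ ‖β‖²}`. Then `β` is the point of
minimal norm of the state polytope of `x` (i.e. `λ_β` is adapted to `x`) if and only if
`β` lies in the convex hull of those support weights of `x` lying on the hyperplane
`H_β = {v | ⟪v, β⟫ = ‖β‖²}`, i.e. the support weights of the limit point `p_β(x)`. -/
theorem stmt_15 (n k : ℕ) (α : Fin (n + 1) → EuclideanSpace ℝ (Fin k))
    (β : EuclideanSpace ℝ (Fin k)) (hβ : β ≠ 0)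
    (x : Fin (n + 1) → ℂ) (hx : x ≠ 0)
    (hY : ∀ i, x i ≠ 0 → ‖β‖ ^ 2 ≤ ⟪α i, β⟫) :
    (β ∈ convexHull ℝ {v : EuclideanSpace ℝ (Fin k) | ∃ i, x i ≠ 0 ∧ α i = v} ∧
        ∀ y ∈ convexHull ℝ {v : EuclideanSpace ℝ (Fin k) | ∃ i, x i ≠ 0 ∧ α i = v},
          ‖β‖ ≤ ‖y‖) ↔
      β ∈ convexHull ℝ
        {v : EuclideanSpace ℝ (Fin k) | ∃ i, (x i ≠ 0 ∧ ⟪α i, β⟫ = ‖β‖ ^ 2) ∧ α i = v} := by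
  set S : Set (EuclideanSpace ℝ (Fin k)) := {v | ∃ i, x i ≠ 0 ∧ α i = v} with hS
  set S' : Set (EuclideanSpace ℝ (Fin k)) :=
    {v | ∃ i, (x i ≠ 0 ∧ ⟪α i, β⟫ = ‖β‖ ^ 2) ∧ α i = v} with hS'
  have hβpos : (0 : ℝ) < ‖β‖ := norm_pos_iff.mpr hβ
  -- every point of the hull of S satisfies ⟪y, β⟫ ≥ ‖β‖²
  have hhalf : ∀ y ∈ convexHull ℝ S, ‖β‖ ^ 2 ≤ ⟪y, β⟫ := by
    intro y hy
    have hconv : Convex ℝ {v : EuclideanSpace ℝ (Fin k) | ‖β‖ ^ 2 ≤ ⟪v, β⟫} := by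
      have := convex_halfSpace_ge (𝕜 := ℝ)
        (f := fun v : EuclideanSpace ℝ (Fin k) => ⟪v, β⟫)
        ⟨fun a b => inner_add_left a b β, fun c a => real_inner_smul_left a β c⟩ (‖β‖ ^ 2)
      exact this
    have hsub : convexHull ℝ S ⊆ {v | ‖β‖ ^ 2 ≤ ⟪v, β⟫} := by
      apply convexHull_min _ hconv
      rintro v ⟨i, hi, rfl⟩
      exact hY i hi
    exact hsub hy
  constructor
  · rintro ⟨hβS, -⟩
    rw [convexHull_eq] at hβS
    obtain ⟨ι, t, w, z, hw0, hw1, hzS, hcm⟩ := hβS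
    have hβeq : ∑ i ∈ t, w i • z i = β := by
      rw [← Finset.centerMass_eq_of_sum_1 t z hw1]; exact hcm
    -- each term with w i ≠ 0 has ⟪z i, β⟫ = ‖β‖²
    have hsum : ∑ i ∈ t, w i * (⟪z i, β⟫ - ‖β‖ ^ 2) = 0 := by
      have h1 : ∑ i ∈ t, w i * ⟪z i, β⟫ = ‖β‖ ^ 2 := by
        have : ⟪∑ i ∈ t, w i • z i, β⟫ = ∑ i ∈ t, w i * ⟪z i, β⟫ := by
          rw [sum_inner]
          exact Finset.sum_congr rfl fun i _ => real_inner_smul_left _ _ _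
        rw [hβeq] at this
        rw [← this, real_inner_self_eq_norm_sq]
      calc ∑ i ∈ t, w i * (⟪z i, β⟫ - ‖β‖ ^ 2)
          = (∑ i ∈ t, w i * ⟪z i, β⟫) - (∑ i ∈ t, w i) * ‖β‖ ^ 2 := by
            rw [Finset.sum_mul, ← Finset.sum_sub_distrib]
            exact Finset.sum_congr rfl fun i _ => by ring
        _ = 0 := by rw [h1, hw1]; ring
    have hterm : ∀ i ∈ t, w i ≠ 0 → ⟪z i, β⟫ = ‖β‖ ^ 2 := by
      intro i hi hwi
      have hnn : ∀ j ∈ t, 0 ≤ w j * (⟪z j, β⟫ - ‖β‖ ^ 2) := by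
        intro j hj
        obtain ⟨m, hm, hmz⟩ := hzS j hj
        rw [← hmz]
        exact mul_nonneg (hw0 j hj) (sub_nonneg.mpr (hY m hm))
      have := (Finset.sum_eq_zero_iff_of_nonneg hnn).mp hsum i hi
      have := mul_eq_zero.mp this
      rcases this with h | h
      · exact absurd h hwi
      · linarith [sub_eq_zero.mp h]
    -- restrict to the nonzero weights
    set t' := t.filter (fun i => w i ≠ 0) with ht'
    have hw1' : ∑ i ∈ t', w i = 1 := by
      rw [ht', Finset.sum_filter_ne_zero]; exact hw1
    have hβeq' : t'.centerMass w z = β := by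
      rw [Finset.centerMass_eq_of_sum_1 _ _ hw1']
      rw [← hβeq, ht']
      apply Finset.sum_filter_of_ne
      intro i hi h
      intro hwi
      exact h (by rw [hwi, zero_smul])
    rw [← hβeq']
    apply Finset.centerMass_mem_convexHull
    · intro i hi
      exact hw0 i (Finset.mem_filter.mp hi).1
    · rw [hw1']; norm_num
    · intro i hi
      obtain ⟨hit, hwi⟩ := Finset.mem_filter.mp hi
      obtain ⟨m, hm, hmz⟩ := hzS i hit
      exact ⟨m, ⟨hm, by rw [hmz]; exact hterm i hit hwi⟩, hmz⟩
  · intro hβS'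
    have hsub : S' ⊆ S := by rintro v ⟨i, ⟨hi, -⟩, rfl⟩; exact ⟨i, hi, rfl⟩
    have hβS : β ∈ convexHull ℝ S := convexHull_mono hsub hβS'
    refine ⟨hβS, fun y hy => ?_⟩
    have h1 : ‖β‖ ^ 2 ≤ ⟪y, β⟫ := hhalf y hy
    have h2 : ⟪y, β⟫ ≤ ‖y‖ * ‖β‖ := real_inner_le_norm y β
    nlinarith
end

section
/- Let E = EuclideanSpace ℝ (Fin k), let α : Fin (n+1) → E, let β ∈ E, and let x : Fin (n+1) → ℂ be nonzero. Then β is the point of minimal norm of convexHull ℝ {α i | x i ≠ 0} if and only if β ∈ convexHull ℝ {α i | x i ≠ 0} and ⟪α i, β⟫ ≥ ‖β‖² for every i with x i ≠ 0. Moreover, if β ≠ 0 and β is the point of minimal norm of convexHull ℝ {α i | x i ≠ 0}, then there exists i with x i ≠ 0 and ⟪α i, β⟫ = ‖β‖². (For a torus acting diagonally on ℙⁿ, the stratum S_β = {[x] | β(x) = β} coincides with Y_β^{ss}: a point has β(x) = β exactly when all its support weights lie in the half-space H_β⁺ and β lies in its state polytope, and for β ≠ 0 at least one support weight then lies on the hyperplane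 H_β.) -/
open scoped RealInnerProductSpace

lemma min_norm_inner' {E : Type*} [NormedAddCommGroup E] [InnerProductSpace ℝ E]
    [CompleteSpace E] {C : Set E}
    (hC : Convex ℝ C) {β : E} (hβ : β ∈ C) (hmin : ∀ y ∈ C, ‖β‖ ≤ ‖y‖)
    {y : E} (hy : y ∈ C) : ‖β‖ ^ 2 ≤ ⟪y, β⟫ := by
  have hne : Nonempty C := ⟨β, hβ⟩
  have hbdd : BddBelow (Set.range fun w : C => ‖(0:E) - (w:E)‖) :=
    ⟨0, by rintro _ ⟨w, rfl⟩; positivity⟩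
  have heq : ‖(0:E) - β‖ = ⨅ w : C, ‖(0:E) - (w:E)‖ := by
    apply le_antisymm
    · exact le_ciInf fun w => by simpa using hmin w w.2
    · simpa using ciInf_le hbdd (⟨β, hβ⟩ : C)
  have := (norm_eq_iInf_iff_real_inner_le_zero hC hβ).mp heq y hy
  have h2 : ⟪(0:E) - β, y - β⟫ = -⟪β, y⟫ + ‖β‖^2 := by
    simp [inner_sub_left, inner_sub_right, real_inner_self_eq_norm_sq]
  rw [h2] at this
  rw [real_inner_comm]
  linarith

lemma inner_lin' {E : Type*} [NormedAddCommGroup E] [InnerProductSpace ℝ E] (β : E) :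
    IsLinearMap ℝ (fun v : E => ⟪v, β⟫) :=
  ⟨fun u v => inner_add_left u v β, fun c v => real_inner_smul_left v β c⟩

/-- **The stratum `S_β` coincides with `Y_β^{ss}`**, for a torus acting diagonally on `ℙⁿ`:
for nonzero `x`, the closest point `β(x)` of the state polytope of `x` to the origin equals
`β` if and only if `β` lies in the state polytope and every support weight of `x` lies in
the half-space `H_β⁺ = {v | ⟪v, β⟫ ≥ ‖β‖²}`; moreover if `β ≠ 0` is the closest point then
at least one support weight lies on the hyperplane `H_β = {v | ⟪v, β⟫ = ‖β‖²}`. -/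
theorem stmt_16 (n k : ℕ) (α : Fin (n + 1) → EuclideanSpace ℝ (Fin k))
    (β : EuclideanSpace ℝ (Fin k)) (x : Fin (n + 1) → ℂ) (hx : x ≠ 0) :
    ((β ∈ convexHull ℝ {v : EuclideanSpace ℝ (Fin k) | ∃ i, x i ≠ 0 ∧ α i = v} ∧
        ∀ y ∈ convexHull ℝ {v : EuclideanSpace ℝ (Fin k) | ∃ i, x i ≠ 0 ∧ α i = v},
          ‖β‖ ≤ ‖y‖) ↔
      (β ∈ convexHull ℝ {v : EuclideanSpace ℝ (Fin k) | ∃ i, x i ≠ 0 ∧ α i = v} ∧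
        ∀ i, x i ≠ 0 → ‖β‖ ^ 2 ≤ ⟪α i, β⟫)) ∧
    (β ≠ 0 →
      (β ∈ convexHull ℝ {v : EuclideanSpace ℝ (Fin k) | ∃ i, x i ≠ 0 ∧ α i = v} ∧
        ∀ y ∈ convexHull ℝ {v : EuclideanSpace ℝ (Fin k) | ∃ i, x i ≠ 0 ∧ α i = v},
          ‖β‖ ≤ ‖y‖) →
      ∃ i, x i ≠ 0 ∧ ⟪α i, β⟫ = ‖β‖ ^ 2) := by
  set S : Set (EuclideanSpace ℝ (Fin k)) := {v | ∃ i, x i ≠ 0 ∧ α i = v} with hS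
  have hC : Convex ℝ (convexHull ℝ S) := convex_convexHull ℝ S
  have fwd : (β ∈ convexHull ℝ S ∧ ∀ y ∈ convexHull ℝ S, ‖β‖ ≤ ‖y‖) →
      (β ∈ convexHull ℝ S ∧ ∀ i, x i ≠ 0 → ‖β‖ ^ 2 ≤ ⟪α i, β⟫) := by
    rintro ⟨hβ, hmin⟩
    refine ⟨hβ, fun i hi => ?_⟩
    exact min_norm_inner' hC hβ hmin (subset_convexHull ℝ S ⟨i, hi, rfl⟩)
  constructor
  · constructor
    · exact fwd
    · rintro ⟨hβ, hineq⟩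
      refine ⟨hβ, fun y hy => ?_⟩
      have hsub : convexHull ℝ S ⊆ {v | ‖β‖ ^ 2 ≤ ⟪v, β⟫} := by
        apply convexHull_min
        · rintro v ⟨i, hi, rfl⟩; exact hineq i hi
        · exact convex_halfSpace_ge (inner_lin' β) _
      have h1 : ‖β‖ ^ 2 ≤ ⟪y, β⟫ := hsub hy
      have h2 : ⟪y, β⟫ ≤ ‖y‖ * ‖β‖ := real_inner_le_norm y β
      nlinarith [norm_nonneg y, norm_nonneg β]
  · intro hβ0 hmin
    obtain ⟨hβ, hineq⟩ := fwd hmin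
    by_contra h
    push_neg at h
    have hsub : convexHull ℝ S ⊆ {v | ‖β‖ ^ 2 < ⟪v, β⟫} := by
      apply convexHull_min
      · rintro v ⟨i, hi, rfl⟩
        exact lt_of_le_of_ne (hineq i hi) (fun e => h i hi e.symm)
      · exact convex_halfSpace_gt (inner_lin' β) _
    have : ‖β‖ ^ 2 < ⟪β, β⟫ := hsub hβ
    rw [real_inner_self_eq_norm_sq] at this
    exact lt_irrefl _ this
end
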